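/- arXiv:1803.08750 — 3 statements merged into one kernel-verified Lean document; each statement's English description precedes it below -/
import Mathlib

section
/- Let P = span(p₁, p₂) (a Lagrangian plane of (V,Ω)), let 𝔭₁ = {X ∈ sp(V) : X(P) ⊆ P} be its stabilizer, and let S²(P) = {X ∈ sp(V) : X(P) = 0 and X(V) ⊆ P}. Then a Lie subalgebra h ⊆ 𝔭₁ has finite type if and only if the abelian subalgebra a = h ∩ S²(P) has finite type. -/
open Module

abbrev V4 : Type := Fin 4 → ℝ

noncomputable section

def Om (u v : V4) : ℝ :=
  -(u 0 * v 2 - u 2 * v 0) - (u 1 * v 3 - u 3 * v 1)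

def sp4 : Set (Module.End ℝ V4) :=
  {X | ∀ u v : V4, Om (X u) v + Om u (X v) = 0}

def pp1 : V4 := ![1,0,0,0]
def pp2 : V4 := ![0,1,0,0]
def qq1 : V4 := ![0,0,1,0]
def qq2 : V4 := ![0,0,0,1]

lemma Om_add_left (a b v : V4) : Om (a + b) v = Om a v + Om b v := by
  simp [Om]; ring
lemma Om_smul_left (c : ℝ) (a v : V4) : Om (c • a) v = c * Om a v := by
  simp [Om]; ring
lemma Om_add_right (u a b : V4) : Om u (a + b) = Om u a + Om u b := by
  simp [Om]; ring
lemma Om_smul_right (c : ℝ) (u a : V4) : Om u (c • a) = c * Om u a := by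
  simp [Om]; ring

def quad (u v : V4) : Module.End ℝ V4 where
  toFun w := Om u w • v + Om v w • u
  map_add' a b := by
    try simp only []
    rw [Om_add_right, Om_add_right, add_smul, add_smul]; abel
  map_smul' c a := by
    try simp only []
    rw [Om_smul_right, Om_smul_right, RingHom.id_apply, mul_smul, mul_smul, smul_add]

def InProl (h : Set (Module.End ℝ V4)) (k : ℕ)
    (T : MultilinearMap ℝ (fun _ : Fin (k+1) => V4) V4) : Prop :=
  (∀ (σ : Equiv.Perm (Fin (k+1))) (v : Fin (k+1) → V4), (T fun i => v (σ i)) = T v) ∧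
  (∀ v : Fin k → V4, ∃ A ∈ h, ∀ w : V4, A w = T (Fin.snoc v w))

def FiniteType (h : Set (Module.End ℝ V4)) : Prop :=
  ∃ k : ℕ, 1 ≤ k ∧
    ∀ T : MultilinearMap ℝ (fun _ : Fin (k+1) => V4) V4, InProl h k T → T = 0

/-- The Lagrangian plane `P = span(p₁,p₂)`. -/
def Pplane : Submodule ℝ V4 := Submodule.span ℝ {pp1, pp2}

/-- The maximal parabolic `𝔭₁ = {X ∈ sp(V) : X(P) ⊆ P}`. -/
def par1 : Set (Module.End ℝ V4) := {X ∈ sp4 | ∀ w ∈ Pplane, X w ∈ Pplane}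

/-- `S²(P) = {X ∈ sp(V) : X(P) = 0 and X(V) ⊆ P}`. -/
def S2P : Set (Module.End ℝ V4) :=
  {X ∈ sp4 | (∀ w ∈ Pplane, X w = 0) ∧ (∀ w : V4, X w ∈ Pplane)}

lemma Om_skew (u v : V4) : Om u v = - Om v u := by simp [Om]; ring

lemma Om_zero_left (v : V4) : Om 0 v = 0 := by simp [Om]

lemma Om_nondeg (x : V4) (hx : ∀ u : V4, Om x u = 0) : x = 0 := by
  have h0 := hx ![0,0,1,0]
  have h1 := hx ![0,0,0,1]
  have h2 := hx ![1,0,0,0]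
  have h3 := hx ![0,1,0,0]
  simp [Om] at h0 h1 h2 h3
  funext i
  fin_cases i <;> simp_all <;> linarith

lemma pp1_mem : pp1 ∈ Pplane := Submodule.subset_span (by simp)
lemma pp2_mem : pp2 ∈ Pplane := Submodule.subset_span (by simp)

lemma mem_Pplane_iff (x : V4) : x ∈ Pplane ↔ x 2 = 0 ∧ x 3 = 0 := by
  constructor
  · intro hx
    induction hx using Submodule.span_induction with
    | mem y hy => rcases hy with h | h <;> subst h <;> simp [pp1, pp2]
    | zero => simp
    | add y z _ _ hy hz => simp [hy.1, hy.2, hz.1, hz.2]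
    | smul c y _ hy => simp [hy.1, hy.2]
  · rintro ⟨h2, h3⟩
    have : x = x 0 • pp1 + x 1 • pp2 := by
      funext i; fin_cases i <;> simp [pp1, pp2, h2, h3]
    rw [this]
    exact Submodule.add_mem _ (Submodule.smul_mem _ _ pp1_mem)
      (Submodule.smul_mem _ _ pp2_mem)

lemma Om_P_P {p p' : V4} (hp : p ∈ Pplane) (hp' : p' ∈ Pplane) : Om p p' = 0 := by
  rw [mem_Pplane_iff] at hp hp'
  simp [Om, hp.1, hp.2, hp'.1, hp'.2]

lemma mem_Pplane_of_Om (x : V4) (h1 : Om x pp1 = 0) (h2 : Om x pp2 = 0) :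
    x ∈ Pplane := by
  rw [mem_Pplane_iff]
  simp [Om, pp1, pp2] at h1 h2
  exact ⟨h1, h2⟩

lemma sp_symm {A : Module.End ℝ V4} (hA : A ∈ sp4) (u v : V4) :
    Om (A u) v = Om (A v) u := by
  have := hA u v
  rw [Om_skew u (A v)] at this
  linarith

-- swap of first and last entries of a tuple of the form cons a (snoc w b)
lemma comp_swap_firstlast {n : ℕ} (a b : V4) (w : Fin n → V4) :
    (fun i => (Fin.cons a (Fin.snoc w b) : Fin (n+2) → V4)
        (Equiv.swap 0 (Fin.last (n+1)) i)) = Fin.cons b (Fin.snoc w a) := by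
  funext i
  rw [Fin.cons_snoc_eq_snoc_cons, Fin.cons_snoc_eq_snoc_cons]
  rcases eq_or_ne i 0 with rfl | h0
  · rw [Equiv.swap_apply_left, Fin.snoc_last]
    have : (0 : Fin (n+2)) = Fin.castSucc 0 := rfl
    rw [this, Fin.snoc_castSucc]
    simp
  · rcases eq_or_ne i (Fin.last (n+1)) with rfl | hl
    · rw [Equiv.swap_apply_right, Fin.snoc_last]
      have : (0 : Fin (n+2)) = Fin.castSucc 0 := rfl
      rw [this, Fin.snoc_castSucc]
      simp
    · rw [Equiv.swap_apply_of_ne_of_ne h0 hl]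
      obtain ⟨j, rfl⟩ := Fin.exists_castSucc_eq.mpr hl
      rw [Fin.snoc_castSucc, Fin.snoc_castSucc]
      have hj0 : j ≠ 0 := by
        intro hj; apply h0; rw [hj]; rfl
      obtain ⟨j', rfl⟩ := Fin.eq_succ_of_ne_zero hj0
      simp [Fin.cons_succ]

-- the extension of a permutation fixing 0
lemma comp_ext_perm {n : ℕ} (σ : Equiv.Perm (Fin n)) (x : V4) (v : Fin n → V4) :
    (fun i => (Fin.cons x v : Fin (n+1) → V4)
        ((Equiv.Perm.decomposeFin.symm (0, σ)) i)) = Fin.cons x (fun i => v (σ i)) := by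
  funext i
  induction i using Fin.cases with
  | zero => rw [Equiv.Perm.decomposeFin_symm_apply_zero]; simp
  | succ j =>
      rw [Equiv.Perm.decomposeFin_symm_apply_succ]
      simp [Fin.cons_succ]


/-- currying the first variable -/
def curry1 {n : ℕ} (T : MultilinearMap ℝ (fun _ : Fin (n+1) => V4) V4) :
    V4 →ₗ[ℝ] MultilinearMap ℝ (fun _ : Fin n => V4) V4 :=
  T.curryLeft

lemma curry1_apply {n : ℕ} (T : MultilinearMap ℝ (fun _ : Fin (n+1) => V4) V4)
    (x : V4) (v : Fin n → V4) : curry1 T x v = T (Fin.cons x v) := rfl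

/-- The curried map at a fixed first vector is in the prolongation, generic form. -/
lemma curry1_inprol {s s' : Set (Module.End ℝ V4)} {k : ℕ}
    {T : MultilinearMap ℝ (fun _ : Fin (k+1+1) => V4) V4}
    (hT : InProl s (k+1) T) (x : V4)
    (hmem : ∀ v : Fin k → V4, ∀ A ∈ s, (∀ w : V4, A w = T (Fin.snoc (Fin.cons x v) w)) → A ∈ s') :
    InProl s' k (curry1 T x) := by
  constructor
  · intro σ v
    rw [curry1_apply, curry1_apply, ← comp_ext_perm σ x v, hT.1]
  · intro v
    obtain ⟨A, hA, hAw⟩ := hT.2 (Fin.cons x v)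
    refine ⟨A, hmem v A hA hAw, fun w => ?_⟩
    rw [hAw, curry1_apply, Fin.cons_snoc_eq_snoc_cons]

/-- vanishing propagates to the next prolongation level -/
lemma prol_step (s : Set (Module.End ℝ V4)) (k : ℕ)
    (hvan : ∀ T : MultilinearMap ℝ (fun _ : Fin (k+1) => V4) V4, InProl s k T → T = 0) :
    ∀ T : MultilinearMap ℝ (fun _ : Fin (k+1+1) => V4) V4, InProl s (k+1) T → T = 0 := by
  intro T hT
  have hx : ∀ x : V4, curry1 T x = 0 := by
    intro x
    exact hvan _ (curry1_inprol hT x (fun v A hA _ => hA))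
  refine MultilinearMap.ext fun m => ?_
  have : T m = T (Fin.cons (m 0) (Fin.tail m)) := by rw [Fin.cons_self_tail]
  rw [this, ← curry1_apply, hx]
  rfl

/-- Key lemma: a prolongation element of `hs ⊆ par1` vanishes whenever two
arguments are in the Lagrangian plane (placed first and last). -/
lemma two_P_vanish {hs : Set (Module.End ℝ V4)} (hsub : hs ⊆ par1) {k : ℕ}
    {T : MultilinearMap ℝ (fun _ : Fin (k+1+1) => V4) V4}
    (hT : InProl hs (k+1) T) {p p' : V4} (hp : p ∈ Pplane) (hp' : p' ∈ Pplane)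
    (v : Fin k → V4) : T (Fin.cons p (Fin.snoc v p')) = 0 := by
  apply Om_nondeg; intro u
  obtain ⟨A, hA, hAw⟩ := hT.2 (Fin.cons p v)
  obtain ⟨B, hB, hBw⟩ := hT.2 (Fin.cons u v)
  have hAsp : A ∈ sp4 := (hsub hA).1
  have e1 : T (Fin.cons p (Fin.snoc v p')) = A p' := by
    rw [hAw, Fin.cons_snoc_eq_snoc_cons]
  have e2 : A u = B p := by
    rw [hAw, hBw, ← Fin.cons_snoc_eq_snoc_cons, ← Fin.cons_snoc_eq_snoc_cons,
      ← comp_swap_firstlast p u v, hT.1]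
  rw [e1, sp_symm hAsp, e2]
  exact Om_P_P ((hsub hB).2 p hp) hp'

/-- If an endomorphism in `par1` kills `pp1` and `pp2`, its image is in `Pplane`
provided it kills the plane. -/
lemma range_in_P {A : Module.End ℝ V4} (hA : A ∈ sp4)
    (h1 : A pp1 = 0) (h2 : A pp2 = 0) (w : V4) : A w ∈ Pplane := by
  apply mem_Pplane_of_Om
  · rw [sp_symm hA, h1, Om_zero_left]
  · rw [sp_symm hA, h2, Om_zero_left]

lemma backward_step {hs : Set (Module.End ℝ V4)} (hsub : hs ⊆ par1) {k0 : ℕ}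
    (hvan : ∀ S : MultilinearMap ℝ (fun _ : Fin (k0+1) => V4) V4,
      InProl (hs ∩ S2P) k0 S → S = 0) :
    ∀ T : MultilinearMap ℝ (fun _ : Fin (k0+1+1) => V4) V4,
      InProl hs (k0+1) T → T = 0 := by
  intro T hT
  -- Step A : the curried map vanishes on the Lagrangian plane
  have hPP : ∀ p, p ∈ Pplane → curry1 T p = 0 := by
    have key : ∀ p, p ∈ Pplane → curry1 T p = 0 → True := fun _ _ _ => trivial
    have base : ∀ p, p ∈ Pplane → curry1 T p = 0 := by
      -- first prove it for pp1 and pp2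
      have hgen : ∀ p, p ∈ Pplane → curry1 T p = 0 := by
        have hone : ∀ p, p ∈ Pplane → InProl (hs ∩ S2P) k0 (curry1 T p) := by
          intro p hp
          apply curry1_inprol hT p
          intro v A hA hAw
          have hAsp : A ∈ sp4 := (hsub hA).1
          have hkill : ∀ p' ∈ Pplane, A p' = 0 := by
            intro p' hp'
            rw [hAw, ← Fin.cons_snoc_eq_snoc_cons]
            exact two_P_vanish hsub hT hp hp' v
          exact ⟨hA, hAsp, hkill,
            range_in_P hAsp (hkill pp1 pp1_mem) (hkill pp2 pp2_mem)⟩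
        intro p hp
        exact hvan _ (hone p hp)
      exact hgen
    exact base
  -- consequence: T vanishes whenever the last argument is in Pplane
  have hsnoc : ∀ (v : Fin (k0+1) → V4) (p' : V4), p' ∈ Pplane →
      T (Fin.snoc v p') = 0 := by
    intro v p' hp'
    have h1 : (Fin.snoc v p' : Fin (k0+1+1) → V4)
        = Fin.cons (v 0) (Fin.snoc (Fin.tail v) p') := by
      rw [Fin.cons_snoc_eq_snoc_cons, Fin.cons_self_tail]
    have h2 := hT.1 (Equiv.swap 0 (Fin.last (k0+1)))
      (Fin.cons (v 0) (Fin.snoc (Fin.tail v) p'))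
    rw [comp_swap_firstlast] at h2
    rw [h1, ← h2, ← curry1_apply, hPP p' hp']
    rfl
  -- Step B : T lies in the prolongation of hs ∩ S2P
  have hmem : InProl (hs ∩ S2P) (k0+1) T := by
    refine ⟨hT.1, fun v => ?_⟩
    obtain ⟨A, hA, hAw⟩ := hT.2 v
    have hAsp : A ∈ sp4 := (hsub hA).1
    have hkill : ∀ p' ∈ Pplane, A p' = 0 := by
      intro p' hp'
      rw [hAw]
      exact hsnoc v p' hp'
    exact ⟨A, ⟨hA, hAsp, hkill,
      range_in_P hAsp (hkill pp1 pp1_mem) (hkill pp2 pp2_mem)⟩, hAw⟩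
  exact prol_step (hs ∩ S2P) k0 hvan T hmem

attribute [local instance 100] LieRing.ofAssociativeRing

/-- a subalgebra `h ⊆ 𝔭₁` has finite type iff `h ∩ S²(P)` has finite type. -/
theorem finite_type_in_par1_iff
    (h : LieSubalgebra ℝ (Module.End ℝ V4))
    (hsub : (h : Set (Module.End ℝ V4)) ⊆ par1) :
    FiniteType (h : Set (Module.End ℝ V4)) ↔
      FiniteType ((h : Set (Module.End ℝ V4)) ∩ S2P) := by
  constructor
  · rintro ⟨k, hk, hvan⟩
    refine ⟨k, hk, fun T hT => hvan T ⟨hT.1, fun v => ?_⟩⟩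
    obtain ⟨A, hA, hAw⟩ := hT.2 v
    exact ⟨A, hA.1, hAw⟩
  · rintro ⟨k0, _, hvan⟩
    exact ⟨k0 + 1, by omega, backward_step hsub hvan⟩
end
end

section
/- Let x₁, x₂, x₃ ∈ R with (x₁, x₂, x₃) ≠ (0,0,0), and let X = x₁·p₁² + x₂·p₁p₂ + x₃·p₂² ∈ sp(V); explicitly, X(q₁) = -2x₁p₁ - x₂p₂, X(q₂) = -x₂p₁ - 2x₃p₂, X(p₁) = X(p₂) = 0. Then the one-dimensional Lie subalgebra R·X of sp(V) has infinite type if and only if x₂² = 4·x₁·x₃. -/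
open Module

noncomputable section

def omL (u : V4) : V4 →ₗ[ℝ] ℝ where
  toFun := Om u
  map_add' := Om_add_right u
  map_smul' c a := by simpa using Om_smul_right c u a

def Tbig (k : ℕ) (u : V4) : MultilinearMap ℝ (fun _ : Fin (k+1) => V4) V4 :=
  (MultilinearMap.mkPiRing ℝ (Fin (k+1)) u).compLinearMap (fun _ => omL u)

lemma Tbig_apply (k : ℕ) (u : V4) (v : Fin (k+1) → V4) :
    Tbig k u v = (∏ i, Om u (v i)) • u := by
  simp [Tbig, omL]

lemma not_finiteType_of (Xel : Module.End ℝ V4) (u : V4) (μ : ℝ)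
    (h1 : ∀ w, Om u w • u = μ • Xel w)
    (w₀ : V4) (h2 : Om u w₀ ≠ 0) :
    ¬ FiniteType ((Submodule.span ℝ {Xel} : Submodule ℝ (Module.End ℝ V4)) :
      Set (Module.End ℝ V4)) := by
  rintro ⟨k, hk, hT⟩
  have hu : u ≠ 0 := by
    intro h
    apply h2
    simp [h, Om]
  have hz := hT (Tbig k u) ?_
  · have h0 : Tbig k u (fun _ => w₀) = 0 := by rw [hz]; rfl
    rw [Tbig_apply] at h0
    simp only [Finset.prod_const, Finset.card_univ, Fintype.card_fin, smul_eq_zero] at h0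
    rcases h0 with h0 | h0
    · exact h2 (pow_eq_zero_iff (Nat.succ_ne_zero k) |>.mp h0)
    · exact hu h0
  · constructor
    · intro σ v
      rw [Tbig_apply, Tbig_apply]
      congr 1
      exact Equiv.prod_comp σ fun i => Om u (v i)
    · intro v
      refine ⟨((∏ i, Om u (v i)) * μ) • Xel, ?_, ?_⟩
      · exact Submodule.smul_mem _ _ (Submodule.mem_span_singleton_self _)
      · intro w
        rw [Tbig_apply]
        have hprod : (∏ i : Fin (k+1), Om u ((Fin.snoc v w : Fin (k+1) → V4) i))
            = (∏ i, Om u (v i)) * Om u w := by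
          rw [Fin.prod_univ_castSucc]
          simp
        rw [hprod, LinearMap.smul_apply, mul_smul, mul_smul, ← h1, smul_comm]

lemma snoc2 (a w : V4) : (Fin.snoc (fun _ : Fin 1 => a) w : Fin 2 → V4) = ![a, w] := by
  funext i
  fin_cases i <;> simp [Fin.snoc]

/-- the line spanned by `X = x₁p₁² + x₂p₁p₂ + x₃p₂² ∈ sp(V)` has infinite
type if and only if `x₂² = 4x₁x₃`. -/
theorem line_in_S2P_infinite_type_iff
    (x₁ x₂ x₃ : ℝ) (hne : ¬(x₁ = 0 ∧ x₂ = 0 ∧ x₃ = 0)) :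
    ¬ FiniteType
        ((Submodule.span ℝ
          {x₁ • quad pp1 pp1 + x₂ • quad pp1 pp2 + x₃ • quad pp2 pp2} :
            Submodule ℝ (Module.End ℝ V4)) : Set (Module.End ℝ V4)) ↔
      x₂ ^ 2 = 4 * x₁ * x₃ := by
  set Xel : Module.End ℝ V4 :=
    x₁ • quad pp1 pp1 + x₂ • quad pp1 pp2 + x₃ • quad pp2 pp2 with hXel
  constructor
  · -- infinite type → discriminant zero
    intro hnot
    by_contra hd
    apply hnot
    refine ⟨1, le_refl 1, ?_⟩
    intro T hp
    have hswap : ∀ a w : V4, T ![a, w] = T ![w, a] := by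
      intro a w
      have := hp.1 (Equiv.swap 0 1) ![w, a]
      rw [← this]
      congr 1
      funext i
      fin_cases i <;> simp
    have key : ∀ a : V4, ∃ c : ℝ, ∀ w : V4, T ![a, w] = c • Xel w := by
      intro a
      obtain ⟨A, hA, hAw⟩ := hp.2 (fun _ : Fin 1 => a)
      rw [SetLike.mem_coe, Submodule.mem_span_singleton] at hA
      obtain ⟨c, rfl⟩ := hA
      exact ⟨c, fun w => by rw [← snoc2, ← hAw, LinearMap.smul_apply]⟩
    choose c hc using key
    -- component values of Xel on qq1, qq2
    have hXq1 : Xel qq1 = ![-(2*x₁), -x₂, 0, 0] := by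
      funext i
      fin_cases i <;>
        simp [hXel, quad, Om, pp1, pp2, qq1, LinearMap.add_apply] <;> ring
    have hXq2 : Xel qq2 = ![-x₂, -(2*x₃), 0, 0] := by
      funext i
      fin_cases i <;>
        simp [hXel, quad, Om, pp1, pp2, qq2, LinearMap.add_apply] <;> ring
    have hsym : ∀ a w : V4, c a • Xel w = c w • Xel a := by
      intro a w
      rw [← hc, ← hc, hswap]
    have h12 := hsym qq1 qq2
    rw [hXq1, hXq2] at h12
    have e0 := congrFun h12 0
    have e1 := congrFun h12 1
    simp [Pi.smul_apply, smul_eq_mul] at e0 e1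
    have hc1 : c qq1 = 0 := by
      have : c qq1 * (x₂ ^ 2 - 4 * x₁ * x₃) = 0 := by
        linear_combination x₂ * e0 - 2 * x₁ * e1
      rcases mul_eq_zero.mp this with h | h
      · exact h
      · exact absurd (by linarith) hd
    have hc2 : c qq2 = 0 := by
      have : c qq2 * (x₂ ^ 2 - 4 * x₁ * x₃) = 0 := by
        linear_combination 2 * x₃ * e0 - x₂ * e1
      rcases mul_eq_zero.mp this with h | h
      · exact h
      · exact absurd (by linarith) hd
    have hca : ∀ a : V4, c a = 0 := by
      intro a
      by_contra hca
      apply hne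
      have g1 : c a • Xel qq1 = 0 := by rw [hsym, hc1, zero_smul]
      have g2 : c a • Xel qq2 = 0 := by rw [hsym, hc2, zero_smul]
      rw [hXq1] at g1
      rw [hXq2] at g2
      have g10 := congrFun g1 0
      have g11 := congrFun g1 1
      have g21 := congrFun g2 1
      simp [Pi.smul_apply, smul_eq_mul, mul_eq_zero, hca] at g10 g11 g21
      refine ⟨by linarith, by linarith, by linarith⟩
    refine MultilinearMap.ext fun m => ?_
    have hm : T m = T ![m 0, m 1] := by
      congr 1
      funext i
      fin_cases i <;> rfl
    rw [hm, hc (m 0) (m 1), hca, zero_smul]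
    rfl
  · -- discriminant zero → infinite type
    intro hd
    by_cases hx1 : x₁ = 0
    · have hx2 : x₂ = 0 := by
        have : x₂ ^ 2 = 0 := by rw [hd, hx1]; ring
        exact pow_eq_zero_iff two_ne_zero |>.mp this
      have hx3 : x₃ ≠ 0 := fun h => hne ⟨hx1, hx2, h⟩
      apply not_finiteType_of Xel ![0, 2*x₃, 0, 0] (2*x₃)
      · intro w
        funext i
        fin_cases i <;>
          simp [hXel, quad, Om, pp1, pp2, LinearMap.add_apply, hx1, hx2] <;>
          ring
      · show Om ![0, 2*x₃, 0, 0] qq2 ≠ 0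
        simp [Om, qq2]
        exact hx3
    · apply not_finiteType_of Xel ![2*x₁, x₂, 0, 0] (2*x₁)
      · intro w
        funext i
        fin_cases i
        · simp [hXel, quad, Om, pp1, pp2, LinearMap.add_apply]; ring
        · simp [hXel, quad, Om, pp1, pp2, LinearMap.add_apply]
          linear_combination (-(w 3)) * hd
        · simp [hXel, quad, Om, pp1, pp2, LinearMap.add_apply]
        · simp [hXel, quad, Om, pp1, pp2, LinearMap.add_apply]
      · show Om ![2*x₁, x₂, 0, 0] qq1 ≠ 0
        simp [Om, qq1]
        exact hx1
end
end

section
/- Let P = span(p₁, p₂) and S²(P) = {X ∈ sp(V) : X(P) = 0 and X(V) ⊆ P}, a 3-dimensional abelian Lie subalgebra of sp(V). Then every 2-dimensional linear subspace of S²(P) (which is automatically an abelian Lie subalgebra) has infinite type. -/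
open Module

noncomputable section

set_option maxHeartbeats 800000

namespace S2PInf

def ind2 : Fin 2 → Fin 4 := ![2, 3]

def cnt {n : ℕ} (s : Fin n → Fin 2) : ℕ := ∑ i, if s i = 0 then 1 else 0

lemma cnt_le {n : ℕ} (s : Fin n → Fin 2) : cnt s ≤ n := by
  classical
  calc cnt s ≤ ∑ _i : Fin n, 1 := Finset.sum_le_sum (fun i _ => by split <;> omega)
    _ = n := by simp

def uvec (c : ℕ → ℝ) (m : ℕ) : V4 := c (m+1) • pp1 + c m • pp2

def Qe (a b c : ℝ) : Module.End ℝ V4 where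
  toFun w := (a * w 2 + b * w 3) • pp1 + (b * w 2 + c * w 3) • pp2
  map_add' u v := by
    funext i
    simp only [Pi.add_apply, Pi.smul_apply, smul_eq_mul]
    ring
  map_smul' r u := by
    funext i
    simp only [Pi.smul_apply, smul_eq_mul, RingHom.id_apply, Pi.add_apply]
    ring

lemma Qe_apply (a b c : ℝ) (w : V4) :
    Qe a b c w = (a * w 2 + b * w 3) • pp1 + (b * w 2 + c * w 3) • pp2 := rfl

def QeL : (Fin 3 → ℝ) →ₗ[ℝ] Module.End ℝ V4 where
  toFun v := Qe (v 0) (v 1) (v 2)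
  map_add' u v := by
    apply LinearMap.ext; intro w; funext i
    simp only [Qe_apply, Pi.add_apply, LinearMap.add_apply, Pi.smul_apply, smul_eq_mul]
    ring
  map_smul' r v := by
    apply LinearMap.ext; intro w; funext i
    simp only [Qe_apply, Pi.smul_apply, smul_eq_mul, RingHom.id_apply, LinearMap.smul_apply,
      Pi.add_apply]
    ring

lemma QeL_apply (v : Fin 3 → ℝ) : QeL v = Qe (v 0) (v 1) (v 2) := rfl

lemma decompose (w : V4) : w = w 0 • pp1 + w 1 • pp2 + w 2 • qq1 + w 3 • qq2 := by
  funext i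
  fin_cases i <;> simp [pp1, pp2, qq1, qq2]

lemma pp1_mem : pp1 ∈ Pplane := Submodule.subset_span (by left; rfl)
lemma pp2_mem : pp2 ∈ Pplane := Submodule.subset_span (by right; rfl)

lemma Pplane_coords {w : V4} (h : w ∈ Pplane) : w 2 = 0 ∧ w 3 = 0 := by
  obtain ⟨a, b, hw⟩ := Submodule.mem_span_pair.1 h
  constructor <;> (rw [← hw]; simp [pp1, pp2])

lemma S2P_repr {X : Module.End ℝ V4} (hX : X ∈ S2P) : ∃ v : Fin 3 → ℝ, QeL v = X := by
  obtain ⟨hsp, hker, him⟩ := hX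
  have h1 : X pp1 = 0 := hker _ pp1_mem
  have h2 : X pp2 = 0 := hker _ pp2_mem
  have hq1 := Pplane_coords (him qq1)
  have hq2 := Pplane_coords (him qq2)
  have hb : X qq2 0 = X qq1 1 := by
    have h := hsp qq1 qq2
    simp only [Om, show qq1 (0:Fin 4) = 0 from rfl, show qq1 (1:Fin 4) = 0 from rfl,
      show qq1 (2:Fin 4) = 1 from rfl, show qq1 (3:Fin 4) = 0 from rfl,
      show qq2 (0:Fin 4) = 0 from rfl, show qq2 (1:Fin 4) = 0 from rfl,
      show qq2 (2:Fin 4) = 0 from rfl, show qq2 (3:Fin 4) = 1 from rfl] at h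
    nlinarith [h]
  set a := X qq1 0 with ha
  set b := X qq1 1 with hbb
  set cc := X qq2 1 with hcc
  refine ⟨![a, b, cc], ?_⟩
  apply LinearMap.ext; intro w
  have e1 : X qq1 = a • pp1 + b • pp2 := by
    conv_lhs => rw [decompose (X qq1)]
    rw [hq1.1, hq1.2]; simp; rfl
  have e2 : X qq2 = b • pp1 + cc • pp2 := by
    conv_lhs => rw [decompose (X qq2)]
    rw [hq2.1, hq2.2, hb]; simp; rfl
  have hXw : X w = w 2 • X qq1 + w 3 • X qq2 := by
    conv_lhs => rw [decompose w]
    simp [map_add, map_smul, h1, h2]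
  rw [QeL_apply, Qe_apply, hXw, e1, e2]
  simp only [Matrix.cons_val_zero, Matrix.cons_val_one, Matrix.head_cons,
    Matrix.cons_val_two, Matrix.tail_cons]
  module

end S2PInf
namespace S2PInf

def Tmap (c : ℕ → ℝ) (n : ℕ) : MultilinearMap ℝ (fun _ : Fin n => V4) V4 :=
  ∑ s : Fin n → Fin 2,
    (LinearMap.toSpanSingleton ℝ V4 (uvec c (cnt s))).compMultilinearMap
      ((MultilinearMap.mkPiAlgebra ℝ (Fin n) ℝ).compLinearMap
        (fun i => LinearMap.proj (φ := fun _ : Fin 4 => ℝ) (ind2 (s i))))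

lemma Tmap_apply (c : ℕ → ℝ) (n : ℕ) (v : Fin n → V4) :
    Tmap c n v = ∑ s : Fin n → Fin 2, (∏ i, v i (ind2 (s i))) • uvec c (cnt s) := by
  rw [Tmap, MultilinearMap.sum_apply]
  simp [MultilinearMap.compLinearMap_apply, LinearMap.compMultilinearMap_apply,
    MultilinearMap.mkPiAlgebra_apply, LinearMap.toSpanSingleton_apply]

lemma cnt_comp {n : ℕ} (s : Fin n → Fin 2) (σ : Equiv.Perm (Fin n)) :
    cnt (fun i => s (σ i)) = cnt s :=
  Equiv.sum_comp σ (fun i => if s i = 0 then 1 else 0)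

lemma Tmap_symm (c : ℕ → ℝ) (n : ℕ) (σ : Equiv.Perm (Fin n)) (v : Fin n → V4) :
    (Tmap c n fun i => v (σ i)) = Tmap c n v := by
  rw [Tmap_apply, Tmap_apply]
  refine Fintype.sum_equiv (Equiv.arrowCongr σ (Equiv.refl (Fin 2))) _ _ ?_
  intro s
  have hcnt : cnt (fun i => s (σ.symm i)) = cnt s := by
    rw [← cnt_comp (fun i => s (σ.symm i)) σ]
    simp
  have hprod : (∏ i, v (σ i) (ind2 (s i))) = ∏ i, v i (ind2 (s (σ.symm i))) := by
    rw [← Equiv.prod_comp σ (fun j => v j (ind2 (s (σ.symm j))))]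
    simp
  simp only [Equiv.arrowCongr_apply, Equiv.coe_refl, Function.comp_def, id_eq]
  rw [hprod, ← hcnt]
  rfl

lemma Tmap_snoc (c : ℕ → ℝ) (k : ℕ) (v : Fin k → V4) (w : V4) :
    Tmap c (k+1) (Fin.snoc v w) =
      ∑ s : Fin k → Fin 2,
        (∏ i, v i (ind2 (s i))) • (Qe (c (cnt s + 2)) (c (cnt s + 1)) (c (cnt s)) w) := by
  rw [Tmap_apply]
  rw [← Equiv.sum_comp (Fin.snocEquiv (fun _ : Fin (k+1) => Fin 2))]
  rw [Fintype.sum_prod_type]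
  have hterm : ∀ (b : Fin 2) (t : Fin k → Fin 2),
      (∏ i : Fin (k+1), Fin.snoc (α := fun _ => V4) v w i (ind2 ((Fin.snocEquiv (fun _ : Fin (k+1) => Fin 2)) (b, t) i)))
          • uvec c (cnt ((Fin.snocEquiv (fun _ : Fin (k+1) => Fin 2)) (b, t)))
        = ((∏ i, v i (ind2 (t i))) * w (ind2 b)) • uvec c (cnt t + if b = 0 then 1 else 0) := by
    intro b t
    have hse : (Fin.snocEquiv (fun _ : Fin (k+1) => Fin 2)) (b, t) = Fin.snoc t b := rfl
    rw [hse]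
    have hprod : (∏ i : Fin (k+1), Fin.snoc (α := fun _ => V4) v w i (ind2 (Fin.snoc (α := fun _ => Fin 2) t b i)))
        = (∏ i, v i (ind2 (t i))) * w (ind2 b) := by
      rw [Fin.prod_univ_castSucc]
      simp [Fin.snoc_castSucc, Fin.snoc_last]
    have hcnt : cnt (Fin.snoc t b) = cnt t + if b = 0 then 1 else 0 := by
      rw [cnt, Fin.sum_univ_castSucc]
      simp [cnt, Fin.snoc_castSucc, Fin.snoc_last]
    rw [hprod, hcnt]
  simp only [hterm]
  rw [Fin.sum_univ_two]
  simp only [show ((0 : Fin 2) = 0) = True by simp, if_true, show ind2 0 = 2 from rfl,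
    show ind2 1 = 3 from rfl, show ((1 : Fin 2) = 0) = False by simp, if_false]
  rw [← Finset.sum_add_distrib]
  refine Finset.sum_congr rfl ?_
  intro t _
  rw [Qe_apply]
  show (_ * w 2) • uvec c (cnt t + 1) + (_ * w 3) • (uvec c (cnt t + 0)) = _
  rw [Nat.add_zero]
  simp only [uvec]
  have h2 : cnt t + 1 + 1 = cnt t + 2 := rfl
  rw [h2]
  set r := ∏ i, v i (ind2 (t i))
  match_scalars <;> ring_nf

end S2PInf
namespace S2PInf

lemma Tmap_eval (c : ℕ → ℝ) (n : ℕ) (m : ℕ) (hm : m ≤ n) :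
    Tmap c n (fun i => if (i : ℕ) < m then qq1 else qq2) = uvec c m := by
  classical
  rw [Tmap_apply]
  have key : ∀ s : Fin n → Fin 2, s ∈ Finset.univ → s ≠ (fun i : Fin n => if (i : ℕ) < m then (0 : Fin 2) else 1) →
      (∏ i : Fin n, (if (i : ℕ) < m then qq1 else qq2) (ind2 (s i))) • uvec c (cnt s) = 0 := by
    intro s _ hs
    have : ∃ i, s i ≠ (if (i : ℕ) < m then 0 else 1) := by
      by_contra h
      push_neg at h
      exact hs (funext h)
    obtain ⟨i, hi⟩ := this
    rw [Finset.prod_eq_zero (Finset.mem_univ i), zero_smul]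
    by_cases h : (i : ℕ) < m
    · rw [if_pos h] at hi ⊢
      have : s i = 1 := by omega
      rw [this]
      rfl
    · rw [if_neg h] at hi ⊢
      have : s i = 0 := by omega
      rw [this]
      rfl
  rw [Finset.sum_eq_single_of_mem (fun i : Fin n => if (i : ℕ) < m then 0 else 1)
    (Finset.mem_univ _) key]
  have hcnt : cnt (fun i : Fin n => if (i : ℕ) < m then (0 : Fin 2) else 1) = m := by
    rw [cnt]
    have : ∀ i : Fin n, (if (if (i : ℕ) < m then (0 : Fin 2) else 1) = 0 then (1:ℕ) else 0)
        = if (i : ℕ) < m then 1 else 0 := by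
      intro i; by_cases h : (i : ℕ) < m <;> simp [h]
    simp only [this]
    rw [Fin.sum_univ_eq_sum_range (fun j => if j < m then (1:ℕ) else 0)]
    rw [← Finset.card_filter]
    have : Finset.filter (fun j => j < m) (Finset.range n) = Finset.range m := by
      ext j; simp only [Finset.mem_filter, Finset.mem_range]; omega
    rw [this, Finset.card_range]
  have hprod : (∏ i : Fin n, (if (i : ℕ) < m then qq1 else qq2)
      (ind2 (if (i : ℕ) < m then (0 : Fin 2) else 1))) = 1 := by
    apply Finset.prod_eq_one
    intro i _
    by_cases h : (i : ℕ) < m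
    · rw [if_pos h, if_pos h]; rfl
    · rw [if_neg h, if_neg h]; rfl
  rw [hcnt, hprod, one_smul]

def LrecMap (k : ℕ) (φ : Module.Dual ℝ (Fin 3 → ℝ)) :
    (Fin (k+3) → ℝ) →ₗ[ℝ] (Fin (k+1) → ℝ) where
  toFun d j := φ ![d ⟨(j : ℕ) + 2, by omega⟩, d ⟨(j : ℕ) + 1, by omega⟩, d ⟨(j : ℕ), by omega⟩]
  map_add' d e := by
    funext j
    show φ _ = φ _ + φ _
    rw [← map_add]
    congr 1
    funext i
    fin_cases i <;> simp
  map_smul' r d := by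
    funext j
    show φ _ = r • φ _
    rw [← map_smul]
    congr 1
    funext i
    fin_cases i <;> simp

lemma LrecMap_apply (k : ℕ) (φ : Module.Dual ℝ (Fin 3 → ℝ)) (d : Fin (k+3) → ℝ)
    (j : Fin (k+1)) :
    LrecMap k φ d j
      = φ ![d ⟨(j : ℕ) + 2, by omega⟩, d ⟨(j : ℕ) + 1, by omega⟩, d ⟨(j : ℕ), by omega⟩] := rfl

lemma exists_ker_vec (k : ℕ) (L : (Fin (k+3) → ℝ) →ₗ[ℝ] (Fin (k+1) → ℝ)) :
    ∃ d : Fin (k+3) → ℝ, d ≠ 0 ∧ L d = 0 := by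
  by_contra h
  push_neg at h
  have hinj : Function.Injective L := by
    rw [← LinearMap.ker_eq_bot, LinearMap.ker_eq_bot']
    intro d hd
    by_contra hd0
    exact (h d hd0) hd
  have := LinearMap.finrank_le_finrank_of_injective hinj
  rw [Module.finrank_fin_fun, Module.finrank_fin_fun] at this
  omega

end S2PInf

open S2PInf

/-- every 2-dimensional linear subspace of `S²(P)` has infinite type. -/
theorem two_dim_subspace_of_S2P_infinite_type
    (W : Submodule ℝ (Module.End ℝ V4))
    (hsub : (W : Set (Module.End ℝ V4)) ⊆ S2P)
    (hdim : Module.finrank ℝ W = 2) :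
    ¬ FiniteType (W : Set (Module.End ℝ V4)) := by
  classical
  rintro ⟨k, -, hzero⟩
  haveI : Module.Free ℝ W := Module.Free.of_divisionRing ℝ W
  have B := Module.finBasisOfFinrankEq ℝ W hdim
  have hBli : LinearIndependent ℝ (fun i : Fin 2 => ((B i : W) : Module.End ℝ V4)) :=
    B.linearIndependent.map_injOn W.subtype Subtype.val_injective.injOn
  obtain ⟨vx, hvx⟩ := S2P_repr (hsub (B 0).2)
  obtain ⟨vy, hvy⟩ := S2P_repr (hsub (B 1).2)
  set vf : Fin 2 → (Fin 3 → ℝ) := ![vx, vy] with hvf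
  have hvfli : LinearIndependent ℝ vf := by
    apply LinearIndependent.of_comp QeL
    have : (QeL ∘ vf) = fun i : Fin 2 => ((B i : W) : Module.End ℝ V4) := by
      funext i
      simp only [Function.comp_apply]
      fin_cases i
      · exact hvx
      · exact hvy
    rw [this]; exact hBli
  set N := Submodule.span ℝ (Set.range vf) with hN
  have hN2 : Module.finrank ℝ N = 2 := by
    rw [finrank_span_eq_card hvfli]; simp
  have hNlt : N < ⊤ := by
    rw [lt_top_iff_ne_top]
    intro h
    rw [h, finrank_top, Module.finrank_fin_fun] at hN2
    omega
  obtain ⟨φ, hφ0, hφmap⟩ := Submodule.exists_dual_map_eq_bot_of_lt_top hNlt inferInstance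
  have hNker : N ≤ LinearMap.ker φ := by
    intro x hx
    rw [LinearMap.mem_ker]
    have : φ x ∈ Submodule.map φ N := Submodule.mem_map_of_mem hx
    rw [hφmap] at this
    simpa using this
  have hker2 : Module.finrank ℝ (LinearMap.ker φ) = 2 := by
    have hlt : LinearMap.ker φ < ⊤ := by
      rw [lt_top_iff_ne_top]
      intro h
      apply hφ0
      apply LinearMap.ext
      intro x
      have : x ∈ LinearMap.ker φ := by rw [h]; trivial
      simpa using this
    have h3 := Submodule.finrank_lt hlt.ne
    rw [Module.finrank_fin_fun] at h3
    have hge := Submodule.finrank_mono hNker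
    rw [hN2] at hge
    omega
  have hNeq : N = LinearMap.ker φ :=
    Submodule.eq_of_le_of_finrank_eq hNker (by rw [hN2, hker2])
  have hmem : ∀ u : Fin 3 → ℝ, φ u = 0 → QeL u ∈ W := by
    intro u hu
    have hu' : u ∈ N := by rw [hNeq]; exact LinearMap.mem_ker.2 hu
    obtain ⟨t, ht⟩ := (Submodule.mem_span_range_iff_exists_fun ℝ).1 hu'
    rw [← ht, map_sum]
    apply Submodule.sum_mem
    intro i _
    rw [map_smul]
    apply Submodule.smul_mem
    fin_cases i
    · show QeL (vf 0) ∈ W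
      rw [show vf 0 = vx from rfl, hvx]
      exact (B 0).2
    · show QeL (vf 1) ∈ W
      rw [show vf 1 = vy from rfl, hvy]
      exact (B 1).2
  -- a nonzero solution of the linear recurrence
  obtain ⟨d, hd0, hdk⟩ := exists_ker_vec k (LrecMap k φ)
  set c : ℕ → ℝ := fun j => if h : j < k+3 then d ⟨j, h⟩ else 0 with hc
  have hcd : ∀ (j : ℕ) (h : j < k + 3), c j = d ⟨j, h⟩ := by
    intro j h
    rw [hc]
    exact dif_pos h
  have hrecW : ∀ j : ℕ, j ≤ k → Qe (c (j+2)) (c (j+1)) (c j) ∈ W := by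
    intro j hj
    have h0 : φ ![d ⟨j + 2, by omega⟩, d ⟨j + 1, by omega⟩, d ⟨j, by omega⟩] = 0 := by
      have h := congrFun hdk ⟨j, by omega⟩
      rw [LrecMap_apply] at h
      simpa using h
    have hW := hmem _ h0
    rw [QeL_apply] at hW
    simp only [Matrix.cons_val_zero, Matrix.cons_val_one, Matrix.head_cons,
      Matrix.cons_val_two, Matrix.tail_cons] at hW
    rwa [hcd (j+2) (by omega), hcd (j+1) (by omega), hcd j (by omega)]
  -- the prolongation element
  have hIn : InProl (W : Set (Module.End ℝ V4)) k (Tmap c (k+1)) := by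
    constructor
    · intro σ v
      exact Tmap_symm c (k+1) σ v
    · intro v
      refine ⟨∑ s : Fin k → Fin 2, (∏ i, v i (ind2 (s i))) •
          (Qe (c (cnt s + 2)) (c (cnt s + 1)) (c (cnt s))), ?_, ?_⟩
      · show _ ∈ W
        apply Submodule.sum_mem
        intro s _
        exact Submodule.smul_mem _ _ (hrecW _ (cnt_le s))
      · intro w
        rw [Tmap_snoc]
        rw [LinearMap.sum_apply]
        refine Finset.sum_congr rfl ?_
        intro s _
        rw [LinearMap.smul_apply]
  have hT0 := hzero _ hIn
  have hc0 : ∀ m : ℕ, m ≤ k + 1 → uvec c m = 0 := by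
    intro m hm
    rw [← Tmap_eval c (k+1) m hm, hT0]
    rfl
  have hall : ∀ j : ℕ, j ≤ k + 2 → c j = 0 := by
    intro j hj
    rcases le_or_gt j (k+1) with h | h
    · have := congrFun (hc0 j h) 1
      simpa [uvec, pp1, pp2] using this
    · have hj' : j = k + 2 := by omega
      have := congrFun (hc0 (k+1) (le_refl _)) 0
      simp only [uvec, Pi.add_apply, Pi.smul_apply, smul_eq_mul] at this
      rw [hj']
      simpa [pp1, pp2] using this
  apply hd0
  funext i
  have h1 := hall (i : ℕ) (by omega)
  rw [hcd (i : ℕ) i.isLt] at h1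
  simpa using h1
end
end
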